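/- For an odd prime p and n ≥ 1, the number of orbits of the Borel subgroup Γ₀(ℤ/pⁿℤ) acting on F_sp(ℤ/pⁿℤ) = {(P₁,P₂) ∈ ℙ¹(ℤ/pⁿℤ)² : P₁ and P₂ have distinct reductions modulo p} is exactly 4n. -/

import Mathlib

open Matrix

/-- The Borel subgroup `Γ₀(R)` of upper triangular matrices in `SL₂(R)`. -/
def Gamma0 (R : Type*) [CommRing R] : Subgroup (Matrix.SpecialLinearGroup (Fin 2) R) where
  carrier := {A | A.1 1 0 = 0}
  one_mem' := by simp [Matrix.one_apply]
  mul_mem' := by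
    intro a b ha hb
    simp only [Set.mem_setOf_eq] at *
    have : ((a * b : Matrix.SpecialLinearGroup (Fin 2) _)).1 1 0
        = a.1 1 0 * b.1 0 0 + a.1 1 1 * b.1 1 0 := by
      simp [Matrix.mul_apply, Fin.sum_univ_two]
    rw [this, ha, hb]; ring
  inv_mem' := by
    intro a ha
    simp only [Set.mem_setOf_eq] at *
    rw [Matrix.SpecialLinearGroup.SL2_inv_expl]
    simp [ha]

/-- A pair is unimodular (over a local ring) if one of its entries is a unit. -/
def IsUnimodular {R : Type*} [CommRing R] (v : Fin 2 → R) : Prop :=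
  IsUnit (v 0) ∨ IsUnit (v 1)

def P1Setoid (R : Type*) [CommRing R] : Setoid {v : Fin 2 → R // IsUnimodular v} where
  r x y := ∃ u : Rˣ, u • x.1 = y.1
  iseqv := by
    refine ⟨fun x => ⟨1, one_smul _ _⟩, ?_, ?_⟩
    · rintro x y ⟨u, h⟩
      exact ⟨u⁻¹, by rw [← h, inv_smul_smul]⟩
    · rintro x y z ⟨u, h⟩ ⟨w, h2⟩
      exact ⟨w * u, by rw [← h2, ← h]; exact (smul_smul w u x.1).symm ▸ rfl⟩

/-- The projective line over `R`: unimodular pairs up to unit scaling. -/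
def P1 (R : Type*) [CommRing R] := Quotient (P1Setoid R)

def P1.mk {R : Type*} [CommRing R] (v : Fin 2 → R) (h : IsUnimodular v) : P1 R :=
  Quotient.mk (P1Setoid R) ⟨v, h⟩

theorem isUnimodular_mulVec {R : Type*} [CommRing R] [IsLocalRing R]
    (g : Matrix.SpecialLinearGroup (Fin 2) R) {v : Fin 2 → R} (hv : IsUnimodular v) :
    IsUnimodular (g.1.mulVec v) := by
  by_contra h
  rw [IsUnimodular, not_or] at h
  obtain ⟨h0, h1⟩ := h
  have hv' : v = (g⁻¹).1.mulVec (g.1.mulVec v) := by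
    rw [Matrix.mulVec_mulVec, ← Matrix.SpecialLinearGroup.coe_mul, inv_mul_cancel]
    simp
  have key : ∀ i, ¬ IsUnit (v i) := by
    intro i
    rw [hv']
    have hexp : (g⁻¹).1.mulVec (g.1.mulVec v) i
        = (g⁻¹).1 i 0 * (g.1.mulVec v 0) + (g⁻¹).1 i 1 * (g.1.mulVec v 1) := by
      simp [Matrix.mulVec, dotProduct, Fin.sum_univ_two]
    rw [hexp]
    intro hu
    have m0 : (g⁻¹).1 i 0 * (g.1.mulVec v 0) ∈ nonunits R := by
      intro hc
      exact h0 (isUnit_of_mul_isUnit_right hc)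
    have m1 : (g⁻¹).1 i 1 * (g.1.mulVec v 1) ∈ nonunits R := by
      intro hc
      exact h1 (isUnit_of_mul_isUnit_right hc)
    exact (IsLocalRing.nonunits_add m0 m1) hu
  rcases hv with h | h
  · exact key 0 h
  · exact key 1 h

noncomputable instance P1.smul {R : Type*} [CommRing R] [IsLocalRing R] :
    SMul (Matrix.SpecialLinearGroup (Fin 2) R) (P1 R) where
  smul g := Quotient.map
    (fun v => ⟨g.1.mulVec v.1, isUnimodular_mulVec g v.2⟩)
    (by
      rintro x y ⟨u, h⟩
      refine ⟨u, ?_⟩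
      simp only [← h]
      rw [Units.smul_def, Units.smul_def, Matrix.mulVec_smul])

theorem P1.smul_mk {R : Type*} [CommRing R] [IsLocalRing R]
    (g : Matrix.SpecialLinearGroup (Fin 2) R) (v : Fin 2 → R) (h : IsUnimodular v) :
    g • (P1.mk v h) = P1.mk (g.1.mulVec v) (isUnimodular_mulVec g h) := rfl

noncomputable instance P1.mulAction {R : Type*} [CommRing R] [IsLocalRing R] :
    MulAction (Matrix.SpecialLinearGroup (Fin 2) R) (P1 R) where
  one_smul := by
    intro x
    induction x using Quotient.ind with
    | _ v =>
      show Quotient.map _ _ _ = _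
      rw [Quotient.map_mk]
      congr 1
      exact Subtype.ext (by simp)
  mul_smul := by
    intro g h x
    induction x using Quotient.ind with
    | _ v =>
      show Quotient.map _ _ _ = Quotient.map _ _ (Quotient.map _ _ _)
      rw [Quotient.map_mk, Quotient.map_mk, Quotient.map_mk]
      congr 1
      exact Subtype.ext (by first
        | simp only [Matrix.SpecialLinearGroup.coe_mul, Matrix.mulVec_mulVec]
        | (simp [Matrix.mul_apply, Fin.sum_univ_two]; constructor <;> ring))

theorem zmod_pow_isUnit_iff (p : ℕ) [hp : Fact p.Prime] (n : ℕ) [NeZero n]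
    (x : ZMod (p^n)) : IsUnit x ↔ ¬ (p ∣ x.val) := by
  haveI : NeZero (p^n) := ⟨pow_ne_zero n hp.out.ne_zero⟩
  conv_lhs => rw [← ZMod.natCast_rightInverse x]
  rw [ZMod.isUnit_iff_coprime]
  rw [Nat.coprime_pow_right_iff (Nat.pos_of_ne_zero (NeZero.ne n))]
  rw [Nat.coprime_comm]
  exact hp.out.coprime_iff_not_dvd

instance zmod_pow_isLocalRing (p : ℕ) [hp : Fact p.Prime] (n : ℕ) [NeZero n] :
    IsLocalRing (ZMod (p^n)) := by
  haveI : NeZero (p^n) := ⟨pow_ne_zero n hp.out.ne_zero⟩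
  haveI : Fact (1 < p^n) :=
    ⟨Nat.one_lt_pow (NeZero.ne n) hp.out.one_lt⟩
  refine IsLocalRing.of_nonunits_add ?_
  intro a b ha hb
  rw [mem_nonunits_iff, zmod_pow_isUnit_iff, not_not] at ha hb ⊢
  rw [ZMod.val_add]
  rw [Nat.dvd_mod_iff (dvd_pow_self p (NeZero.ne n))]
  exact Nat.dvd_add ha hb

theorem isUnimodular_pair_left {R : Type*} [CommRing R] {a b : R} (h : IsUnit a) :
    IsUnimodular ![a, b] := Or.inl (by simpa using h)

theorem isUnimodular_pair_right {R : Type*} [CommRing R] {a b : R} (h : IsUnit b) :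
    IsUnimodular ![a, b] := Or.inr (by simpa using h)

/-- Reduction map `ℙ¹(ℤ/pⁿℤ) → ℙ¹(ℤ/pℤ)`. -/
noncomputable def P1.red (p : ℕ) [Fact p.Prime] (n : ℕ) [NeZero n] :
    P1 (ZMod (p ^ n)) → P1 (ZMod p) :=
  Quotient.map
    (fun v => ⟨(ZMod.castHom (dvd_pow_self p (NeZero.ne n)) (ZMod p)) ∘ v.1, by
      rcases v.2 with h | h
      · exact Or.inl (by simpa using h.map (ZMod.castHom (dvd_pow_self p (NeZero.ne n)) (ZMod p)))
      · exact Or.inr (by simpa using h.map (ZMod.castHom (dvd_pow_self p (NeZero.ne n)) (ZMod p)))⟩)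
    (by
      rintro x y ⟨u, h⟩
      refine ⟨Units.map (ZMod.castHom (dvd_pow_self p (NeZero.ne n)) (ZMod p)) u, ?_⟩
      funext i
      simp only [← h, Pi.smul_apply, Units.smul_def, Function.comp_apply, Units.coe_map,
        MonoidHom.coe_coe, smul_eq_mul, _root_.map_mul])

theorem P1.red_smul (p : ℕ) [Fact p.Prime] (n : ℕ) [NeZero n]
    (g : Matrix.SpecialLinearGroup (Fin 2) (ZMod (p ^ n))) (x : P1 (ZMod (p ^ n))) :
    P1.red p n (g • x)
      = (Matrix.SpecialLinearGroup.map
          (ZMod.castHom (dvd_pow_self p (NeZero.ne n)) (ZMod p)) g) • P1.red p n x := by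
  induction x using Quotient.ind with
  | _ v =>
    show Quotient.map _ _ (Quotient.map _ _ _) = Quotient.map _ _ (Quotient.map _ _ _)
    rw [Quotient.map_mk, Quotient.map_mk, Quotient.map_mk, Quotient.map_mk]
    congr 1
    refine Subtype.ext ?_
    funext i
    simp only [Matrix.mulVec, dotProduct, Fin.sum_univ_two, Function.comp_apply,
      Matrix.SpecialLinearGroup.map_apply_coe, RingHom.mapMatrix_apply, Matrix.map_apply,
      _root_.map_add, _root_.map_mul]

/-- Pairs of points of `ℙ¹(ℤ/pⁿℤ)` with distinct reductions mod `p`. -/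
def Fsp (p : ℕ) [Fact p.Prime] (n : ℕ) [NeZero n] : Type _ :=
  {x : P1 (ZMod (p ^ n)) × P1 (ZMod (p ^ n)) // P1.red p n x.1 ≠ P1.red p n x.2}

noncomputable instance Fsp.smul (p : ℕ) [Fact p.Prime] (n : ℕ) [NeZero n] :
    SMul (Matrix.SpecialLinearGroup (Fin 2) (ZMod (p ^ n))) (Fsp p n) :=
  ⟨fun g x => ⟨(g • x.1.1, g • x.1.2), by
    rw [P1.red_smul, P1.red_smul]
    intro hc
    exact x.2 (MulAction.injective _ hc)⟩⟩

noncomputable instance Fsp.mulAction (p : ℕ) [Fact p.Prime] (n : ℕ) [NeZero n] :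
    MulAction (Matrix.SpecialLinearGroup (Fin 2) (ZMod (p ^ n))) (Fsp p n) where
  one_smul x := Subtype.ext (Prod.ext (one_smul _ _) (one_smul _ _))
  mul_smul g h x := Subtype.ext (Prod.ext (mul_smul g h x.1.1) (mul_smul g h x.1.2))

section NT

variable (p : ℕ) [hp : Fact p.Prime] (n : ℕ) [NeZero n]

/-- abbreviation for the reduction map -/
noncomputable def redHom : ZMod (p^n) →+* ZMod p :=
  ZMod.castHom (dvd_pow_self p (NeZero.ne n)) (ZMod p)

lemma redHom_eq_zero_iff (x : ZMod (p^n)) :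
    redHom p n x = 0 ↔ p ∣ x.val := by
  rw [redHom, ZMod.castHom_apply, ← ZMod.natCast_val, ZMod.natCast_eq_zero_iff]


lemma isUnit_iff_red (x : ZMod (p^n)) : IsUnit x ↔ redHom p n x ≠ 0 := by
  rw [zmod_pow_isUnit_iff p n, ne_eq, redHom_eq_zero_iff]

lemma red_eq_zero_of_pow_mul_eq_zero {j : ℕ} (hj : j < n) {z : ZMod (p^n)}
    (h : (p : ZMod (p^n))^j * z = 0) : redHom p n z = 0 := by
  have hz : ((p^j * z.val : ℕ) : ZMod (p^n)) = 0 := by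
    push_cast
    rw [ZMod.natCast_val, ZMod.cast_id]
    exact h
  rw [ZMod.natCast_eq_zero_iff] at hz
  have hz' : p^j * p^(n-j) ∣ p^j * z.val := by
    rw [← pow_add, (by omega : j + (n-j) = n)]
    exact hz
  have h2 : p^(n-j) ∣ z.val :=
    (mul_dvd_mul_iff_left (pow_ne_zero j hp.out.ne_zero)).mp hz'
  rw [redHom_eq_zero_iff]
  exact dvd_trans (dvd_pow_self p (by omega : n - j ≠ 0)) h2

lemma sq_lift_step (hp2 : p ≠ 2) {m : ℕ} (hm : 1 ≤ m) {s u : ℤ}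
    (hpu : ¬ (p:ℤ) ∣ u) (h : (p:ℤ)^m ∣ s^2 - u) :
    ∃ s' : ℤ, (p:ℤ)^(m+1) ∣ s'^2 - u := by
  obtain ⟨e, he⟩ := h
  have hps : ¬ (p:ℤ) ∣ s := by
    intro hs
    apply hpu
    have h1 : (p:ℤ) ∣ s^2 := by
      rw [sq]
      exact hs.mul_right s
    have h2 : (p:ℤ) ∣ s^2 - u := he ▸ (dvd_pow_self (p:ℤ) (by omega : m ≠ 0)).mul_right e
    have h3 : (p:ℤ) ∣ s^2 - (s^2 - u) := dvd_sub h1 h2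
    simpa using h3
  haveI : NeZero p := ⟨hp.out.ne_zero⟩
  have h2ne : (2 : ZMod p) ≠ 0 := by
    intro h0
    have h2 : ((2:ℕ) : ZMod p) = 0 := by exact_mod_cast h0
    rw [ZMod.natCast_eq_zero_iff] at h2
    exact hp2 ((Nat.prime_dvd_prime_iff_eq hp.out Nat.prime_two).mp h2)
  have hsne : ((s : ZMod p)) ≠ 0 := by
    rw [Ne, ZMod.intCast_zmod_eq_zero_iff_dvd]
    exact_mod_cast hps
  set t₀ : ZMod p := -(e : ZMod p) * (2 * (s : ZMod p))⁻¹ with ht₀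
  set t : ℤ := (t₀.val : ℤ) with ht
  have hkey : ((e + 2*s*t : ℤ) : ZMod p) = 0 := by
    push_cast
    rw [ht, Int.cast_natCast, ZMod.natCast_val, ZMod.cast_id, ht₀]
    have h2s : (2 * (s : ZMod p)) ≠ 0 := mul_ne_zero h2ne hsne
    field_simp
    ring
  rw [ZMod.intCast_zmod_eq_zero_iff_dvd] at hkey
  refine ⟨s + t * p^m, ?_⟩
  have hexp : (s + t * (p:ℤ)^m)^2 - u = (p:ℤ)^m * (e + 2*s*t) + t^2 * ((p:ℤ)^m)^2 := by
    linear_combination he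
  rw [hexp]
  apply dvd_add
  · rw [pow_succ]
    exact mul_dvd_mul_left _ hkey
  · have : (p:ℤ)^(m+1) ∣ ((p:ℤ)^m)^2 := by
      rw [← pow_mul]
      exact pow_dvd_pow _ (by omega)
    exact this.mul_left _

lemma isSquare_of_red_isSquare (hp2 : p ≠ 2) {u : ZMod (p^n)} (hu : IsUnit u)
    (h : IsSquare (redHom p n u)) : IsSquare u := by
  haveI : NeZero p := ⟨hp.out.ne_zero⟩
  have hpu : ¬ (p:ℤ) ∣ (u.val : ℤ) := by
    rw [Int.natCast_dvd_natCast]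
    exact (zmod_pow_isUnit_iff p n u).mp hu
  have hred : redHom p n u = ((u.val : ℕ) : ZMod p) := by
    rw [redHom, ZMod.castHom_apply, ZMod.natCast_val]
  obtain ⟨r, hr⟩ := h
  have base : ∃ s : ℤ, (p:ℤ)^1 ∣ s^2 - (u.val:ℤ) := by
    refine ⟨(r.val : ℤ), ?_⟩
    rw [pow_one, ← ZMod.intCast_zmod_eq_zero_iff_dvd]
    push_cast
    simp only [ZMod.natCast_val, ZMod.cast_id]
    rw [show (ZMod.cast u : ZMod p) = redHom p n u from (ZMod.castHom_apply u).symm, hr]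
    ring
  have step : ∀ m : ℕ, 1 ≤ m → ∃ s : ℤ, (p:ℤ)^m ∣ s^2 - (u.val:ℤ) := by
    intro m hm
    induction m with
    | zero => omega
    | succ k ih =>
      rcases Nat.eq_or_lt_of_le hm with h1 | h1
      · rw [← h1] at *
        exact base
      · obtain ⟨s, hs⟩ := ih (by omega)
        exact sq_lift_step p hp2 (by omega) hpu hs
  obtain ⟨s, hs⟩ := step n (Nat.one_le_iff_ne_zero.mpr (NeZero.ne n))
  refine ⟨((s : ℤ) : ZMod (p^n)), ?_⟩
  have : ((s^2 - (u.val:ℤ) : ℤ) : ZMod (p^n)) = 0 := by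
    rw [ZMod.intCast_zmod_eq_zero_iff_dvd]
    exact_mod_cast hs
  push_cast at this
  simp only [ZMod.natCast_val, ZMod.cast_id] at this
  linear_combination -this

lemma red_p_pow_eq_zero {k : ℕ} (hk : 1 ≤ k) :
    redHom p n ((p : ZMod (p^n))^k) = 0 := by
  rw [_root_.map_pow, _root_.map_natCast, ZMod.natCast_self, zero_pow (by omega : k ≠ 0)]

lemma pow_mul_unit_inj_aux {j k : ℕ} (hj : j < n) (hjk : j ≤ k) {u v : ZMod (p^n)}
    (hu : IsUnit u)
    (h : (p : ZMod (p^n))^j * u = (p : ZMod (p^n))^k * v) :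
    redHom p n u = redHom p n ((p : ZMod (p^n))^(k-j) * v) := by
  have h0 : (p : ZMod (p^n))^j * (u - (p : ZMod (p^n))^(k-j) * v) = 0 := by
    have he : (p : ZMod (p^n))^j * ((p : ZMod (p^n))^(k-j) * v) = (p : ZMod (p^n))^k * v := by
      rw [← mul_assoc, ← pow_add]
      congr 2
      omega
    rw [mul_sub, h, he, sub_self]
  have h1 := red_eq_zero_of_pow_mul_eq_zero p n hj h0
  rw [_root_.map_sub, sub_eq_zero] at h1
  exact h1

lemma pow_mul_unit_inj {j k : ℕ} (hj : j < n) (hk : k < n) {u v : ZMod (p^n)}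
    (hu : IsUnit u) (hv : IsUnit v)
    (h : (p : ZMod (p^n))^j * u = (p : ZMod (p^n))^k * v) :
    j = k ∧ redHom p n u = redHom p n v := by
  have hmain : j = k := by
    by_contra hne
    rcases Nat.lt_or_ge j k with hlt | hge
    · have h1 := pow_mul_unit_inj_aux p n hj (le_of_lt hlt) hu h
      rw [_root_.map_mul, red_p_pow_eq_zero p n (by omega), zero_mul] at h1
      exact (isUnit_iff_red p n u).mp hu h1
    · have hlt : k < j := by omega
      have h1 := pow_mul_unit_inj_aux p n hk (le_of_lt hlt) hv h.symm
      rw [_root_.map_mul, red_p_pow_eq_zero p n (by omega), zero_mul] at h1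
      exact (isUnit_iff_red p n v).mp hv h1
  subst hmain
  have h1 := pow_mul_unit_inj_aux p n hj (le_refl j) hu h
  simpa using h1

lemma unit_mul_pow_ne_zero {j : ℕ} (hj : j < n) {x : ZMod (p^n)} (hx : IsUnit x) :
    x * (p : ZMod (p^n))^j ≠ 0 := by
  intro h0
  have h1 : (p : ZMod (p^n))^j * x = 0 := by rw [mul_comm]; exact h0
  exact (isUnit_iff_red p n x).mp hx (red_eq_zero_of_pow_mul_eq_zero p n hj h1)

lemma exists_nonres (hp2 : p ≠ 2) :
    ∃ c : ZMod (p^n), IsUnit c ∧ ¬ IsSquare (redHom p n c) := by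
  have hchar : ringChar (ZMod p) ≠ 2 := by
    rw [ZMod.ringChar_zmod_n]
    exact hp2
  obtain ⟨c₀, hc₀⟩ := FiniteField.exists_nonsquare (F := ZMod p) hchar
  haveI : NeZero p := ⟨hp.out.ne_zero⟩
  have hcast : redHom p n ((c₀.val : ℕ) : ZMod (p^n)) = c₀ := by
    rw [_root_.map_natCast, ZMod.natCast_val, ZMod.cast_id]
  refine ⟨((c₀.val : ℕ) : ZMod (p^n)), ?_, ?_⟩
  · rw [isUnit_iff_red, hcast]
    intro h0
    exact hc₀ (h0 ▸ ⟨0, by ring⟩)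
  · rw [hcast]
    exact hc₀

lemma unit_sq_class (hp2 : p ≠ 2) {c : ZMod (p^n)} (hcu : IsUnit c)
    (hc : ¬ IsSquare (redHom p n c)) {u : ZMod (p^n)} (hu : IsUnit u) :
    ∃ a : ZMod (p^n), IsUnit a ∧ (u = a^2 * 1 ∨ u = a^2 * c) := by
  by_cases hsq : IsSquare (redHom p n u)
  · obtain ⟨s, hs⟩ := isSquare_of_red_isSquare p n hp2 hu hsq
    refine ⟨s, ?_, Or.inl (by rw [hs]; ring)⟩
    exact isUnit_of_mul_isUnit_left (hs ▸ hu)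
  · obtain ⟨cu, hcu2⟩ := id hcu
    set v : ZMod (p^n) := u * ↑cu⁻¹ with hv
    have hvu : IsUnit v := hu.mul (Units.isUnit _)
    have hune : redHom p n u ≠ 0 := (isUnit_iff_red p n u).mp hu
    have hcne : redHom p n c ≠ 0 := (isUnit_iff_red p n c).mp hcu
    have hvc : v * c = u := by
      rw [hv, mul_assoc, ← hcu2, Units.inv_mul, mul_one]
    have hredv : redHom p n v = redHom p n u * (redHom p n c)⁻¹ := by
      have : redHom p n v * redHom p n c = redHom p n u := by
        rw [← _root_.map_mul, hvc]
      field_simp [← this]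
      exact this
    have hvsq : IsSquare (redHom p n v) := by
      have hvne : redHom p n v ≠ 0 := (isUnit_iff_red p n v).mp hvu
      rw [← quadraticChar_one_iff_isSquare hvne]
      have h1 : quadraticChar (ZMod p) (redHom p n u) = -1 :=
        quadraticChar_neg_one_iff_not_isSquare.mpr hsq
      have h2 : quadraticChar (ZMod p) ((redHom p n c)⁻¹) = -1 := by
        rw [quadraticChar_neg_one_iff_not_isSquare]
        intro hsqi
        exact hc (by simpa using hsqi.inv)
      rw [hredv, _root_.map_mul, h1, h2]
      ring
    obtain ⟨s, hs⟩ := isSquare_of_red_isSquare p n hp2 hvu hvsq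
    refine ⟨s, isUnit_of_mul_isUnit_left (hs ▸ hvu), Or.inr ?_⟩
    rw [← hvc, hs]
    ring

lemma sq_class_exists (hp2 : p ≠ 2) {c : ZMod (p^n)} (hcu : IsUnit c)
    (hc : ¬ IsSquare (redHom p n c)) (x : ZMod (p^n)) :
    ∃ a : ZMod (p^n), IsUnit a ∧
      (x = 0 ∨ ∃ k, k < n ∧ (x = a^2 * (1 * (p : ZMod (p^n))^k)
        ∨ x = a^2 * (c * (p : ZMod (p^n))^k))) := by
  by_cases hx : x = 0
  · exact ⟨1, isUnit_one, Or.inl hx⟩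
  haveI : NeZero (p^n) := ⟨pow_ne_zero n hp.out.ne_zero⟩
  have hxval : x.val ≠ 0 := by
    intro h0
    exact hx ((ZMod.val_eq_zero x).mp h0)
  set k := (x.val).factorization p with hk
  set m := x.val / p ^ k with hm
  have hdvd : p ^ k ∣ x.val := Nat.ordProj_dvd x.val p
  have hmm : p ^ k * m = x.val := Nat.ordProj_mul_ordCompl_eq_self x.val p
  have hpm : ¬ p ∣ m := Nat.not_dvd_ordCompl hp.out hxval
  have hkn : k < n := by
    have h1 : p ^ k ≤ x.val := Nat.le_of_dvd (Nat.pos_of_ne_zero hxval) hdvd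
    have h2 : x.val < p ^ n := ZMod.val_lt x
    have := lt_of_le_of_lt h1 h2
    exact (Nat.pow_lt_pow_iff_right hp.out.one_lt).mp this
  have hum : IsUnit ((m : ℕ) : ZMod (p^n)) := by
    rw [zmod_pow_isUnit_iff]
    rw [ZMod.val_natCast]
    rw [Nat.dvd_mod_iff (dvd_pow_self p (NeZero.ne n))]
    exact hpm
  have hxeq : x = ((m : ℕ) : ZMod (p^n)) * (p : ZMod (p^n))^k := by
    conv_lhs => rw [← ZMod.natCast_rightInverse x]
    rw [← hmm]
    push_cast
    ring
  obtain ⟨a, ha, hcase⟩ := unit_sq_class p n hp2 hcu hc hum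
  refine ⟨a, ha, Or.inr ⟨k, hkn, ?_⟩⟩
  rcases hcase with h1 | h1
  · exact Or.inl (by rw [hxeq, h1]; ring)
  · exact Or.inr (by rw [hxeq, h1]; ring)

lemma sq_canonical_inj (hp2 : p ≠ 2) {c : ZMod (p^n)} (hcu : IsUnit c)
    (hc : ¬ IsSquare (redHom p n c)) {a : ZMod (p^n)} (ha : IsUnit a)
    {j k : ℕ} {e f : Bool} (hj : j < n) (hk : k < n)
    (h : a^2 * ((if e then c else 1) * (p : ZMod (p^n))^j)
      = (if f then c else 1) * (p : ZMod (p^n))^k) :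
    e = f ∧ j = k := by
  set u : ZMod (p^n) := a^2 * (if e then c else 1) with hu
  set v : ZMod (p^n) := (if f then c else 1) with hv
  have hifu : ∀ b : Bool, IsUnit (if b then c else (1 : ZMod (p^n))) := by
    intro b
    cases b
    · simpa using isUnit_one
    · simpa using hcu
  have huu : IsUnit u := ((ha.pow 2).mul (hifu e))
  have hvu : IsUnit v := hifu f
  have h' : (p : ZMod (p^n))^j * u = (p : ZMod (p^n))^k * v := by
    rw [hu, hv]
    calc (p : ZMod (p^n))^j * (a^2 * (if e then c else 1))
        = a^2 * ((if e then c else 1) * (p : ZMod (p^n))^j) := by ring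
      _ = (if f then c else 1) * (p : ZMod (p^n))^k := h
      _ = (p : ZMod (p^n))^k * (if f then c else 1) := by ring
  obtain ⟨hjk, hred⟩ := pow_mul_unit_inj p n hj hk huu hvu h'
  refine ⟨?_, hjk⟩
  have hane : redHom p n a ≠ 0 := (isUnit_iff_red p n a).mp ha
  rw [hu, hv] at hred
  cases e <;> cases f
  · rfl
  · -- e = false, f = true : red (a^2) = red c, square, contradiction
    exfalso
    apply hc
    simp at hred
    rw [← hred, sq]
    exact ⟨_, rfl⟩
  · -- e = true, f = false : red (a^2 * c) = 1
    exfalso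
    apply hc
    simp at hred
    have : redHom p n c = ((redHom p n a)⁻¹)^2 := by
      field_simp at hred ⊢
      linear_combination hred
    rw [this, sq]
    exact ⟨_, rfl⟩
  · rfl

end NT


section P1Lemmas

variable {S : Type*} [CommRing S]

lemma P1.mk_eq_mk_iff {v w : Fin 2 → S} (hv : IsUnimodular v) (hw : IsUnimodular w) :
    P1.mk v hv = P1.mk w hw ↔ ∃ u : Sˣ, u • v = w :=
  ⟨fun h => Quotient.exact h, fun h => Quotient.sound h⟩

/-- The "determinant" of a pair of vectors. -/
def dets (v w : Fin 2 → S) : S := v 0 * w 1 - w 0 * v 1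

lemma dets_mulVec (g : Matrix.SpecialLinearGroup (Fin 2) S) (v w : Fin 2 → S) :
    dets (g.1.mulVec v) (g.1.mulVec w) = dets v w := by
  have hdet := g.2
  rw [Matrix.det_fin_two] at hdet
  simp only [dets, Matrix.mulVec, dotProduct, Fin.sum_univ_two]
  linear_combination (v 0 * w 1 - w 0 * v 1) * hdet

lemma P1.mk_eq_mk_field {K : Type*} [Field K] {v w : Fin 2 → K}
    (hv : IsUnimodular v) (hw : IsUnimodular w) :
    P1.mk v hv = P1.mk w hw ↔ dets v w = 0 := by
  rw [P1.mk_eq_mk_iff]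
  constructor
  · rintro ⟨u, h⟩
    rw [← h]
    show v 0 * (↑u * v 1) - (↑u * v 0) * v 1 = 0
    ring
  · intro h
    rw [dets] at h
    by_cases hv1 : v 1 = 0
    · have hv0 : v 0 ≠ 0 := by
        rcases hv with h1 | h1
        · exact h1.ne_zero
        · exact absurd hv1 h1.ne_zero
      have hw1 : w 1 = 0 := by
        have h2 : v 0 * w 1 = 0 := by linear_combination h + w 0 * hv1
        exact (mul_eq_zero.mp h2).resolve_left hv0
      have hw0 : w 0 ≠ 0 := by
        rcases hw with h1 | h1
        · exact h1.ne_zero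
        · exact absurd hw1 h1.ne_zero
      refine ⟨Units.mk0 (w 0 / v 0) (div_ne_zero hw0 hv0), ?_⟩
      funext i
      fin_cases i
      · show w 0 / v 0 * v 0 = w 0
        exact div_mul_cancel₀ _ hv0
      · show w 0 / v 0 * v 1 = w 1
        rw [hv1, hw1, mul_zero]
    · by_cases hw1 : w 1 = 0
      · exfalso
        have hw0 : w 0 ≠ 0 := by
          rcases hw with h1 | h1
          · exact h1.ne_zero
          · exact absurd hw1 h1.ne_zero
        have h2 : w 0 * v 1 = 0 := by linear_combination -h + v 0 * hw1
        rcases mul_eq_zero.mp h2 with h3 | h3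
        · exact hw0 h3
        · exact hv1 h3
      · refine ⟨Units.mk0 (w 1 / v 1) (div_ne_zero hw1 hv1), ?_⟩
        funext i
        fin_cases i
        · show w 1 / v 1 * v 0 = w 0
          field_simp
          linear_combination h
        · show w 1 / v 1 * v 1 = w 1
          exact div_mul_cancel₀ _ hv1

lemma ring_inverse_unit_mul (u : Sˣ) (d : S) :
    Ring.inverse ((u : S) * d) = ↑u⁻¹ * Ring.inverse d := by
  by_cases hd : IsUnit d
  · lift d to Sˣ using hd
    rw [← Units.val_mul, Ring.inverse_unit, Ring.inverse_unit, _root_.mul_inv_rev, Units.val_mul,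
      mul_comm]
  · have hud : ¬ IsUnit ((u : S) * d) := by
      intro h
      apply hd
      have h2 : IsUnit ((↑u⁻¹ : S) * ((u : S) * d)) := (Units.isUnit u⁻¹).mul h
      rwa [← mul_assoc, Units.inv_mul, one_mul] at h2
    rw [Ring.inverse_non_unit _ hd, Ring.inverse_non_unit _ hud, mul_zero]

/-- The scaling-invariant "cross ratio type" invariant  `y₁ y₂ / det`. -/
noncomputable def tP1 : P1 S → P1 S → S :=
  Quotient.lift₂ (fun v w => v.1 1 * w.1 1 * Ring.inverse (dets v.1 w.1))
    (by
      rintro a b a' b' ⟨u, hu⟩ ⟨u', hu'⟩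
      rw [← hu, ← hu']
      have hd : dets (u • a.1) (u' • b.1) = ↑(u * u') * dets a.1 b.1 := by
        show (↑u * a.1 0) * (↑u' * b.1 1) - (↑u' * b.1 0) * (↑u * a.1 1)
          = ↑(u * u') * (a.1 0 * b.1 1 - b.1 0 * a.1 1)
        rw [Units.val_mul]
        ring
      rw [hd, ring_inverse_unit_mul]
      have h1 : ((u * u' : Sˣ) : S) * ((↑(u * u')⁻¹ : S)) = 1 := Units.mul_inv _
      rw [Units.val_mul] at h1
      show a.1 1 * b.1 1 * Ring.inverse (dets a.1 b.1)
        = (↑u * a.1 1) * (↑u' * b.1 1) * (↑(u * u')⁻¹ * Ring.inverse (dets a.1 b.1))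
      linear_combination (-(a.1 1 * b.1 1 * Ring.inverse (dets a.1 b.1))) * h1)

lemma tP1_mk {v w : Fin 2 → S} (hv : IsUnimodular v) (hw : IsUnimodular w) :
    tP1 (P1.mk v hv) (P1.mk w hw) = v 1 * w 1 * Ring.inverse (dets v w) := rfl

/-- Whether the second coordinate is a unit: an invariant of a point of `P1`. -/
def P1.yIsUnit : P1 S → Prop :=
  Quotient.lift (fun v => IsUnit (v.1 1))
    (by
      rintro a b ⟨u, h⟩
      rw [← h]
      show IsUnit (a.1 1) = IsUnit (↑u * a.1 1)
      exact propext ⟨fun h1 => (Units.isUnit u).mul h1,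
        fun h1 => isUnit_of_mul_isUnit_right h1⟩)

lemma yIsUnit_mk {v : Fin 2 → S} (hv : IsUnimodular v) :
    P1.yIsUnit (P1.mk v hv) = IsUnit (v 1) := rfl

lemma isUnit_unit_mul_iff {u x : S} (hu : IsUnit u) : IsUnit (u * x) ↔ IsUnit x :=
  ⟨fun h => isUnit_of_mul_isUnit_right h, fun h => hu.mul h⟩

variable [IsLocalRing S]

lemma mulVec_one_entry (g : Matrix.SpecialLinearGroup (Fin 2) S) (v : Fin 2 → S) :
    g.1.mulVec v 1 = g.1 1 0 * v 0 + g.1 1 1 * v 1 := by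
  simp [Matrix.mulVec, dotProduct, Fin.sum_univ_two]

lemma gamma0_isUnit_entry (g : Matrix.SpecialLinearGroup (Fin 2) S) (hg : g.1 1 0 = 0) :
    IsUnit (g.1 1 1) := by
  have hdet := g.2
  rw [Matrix.det_fin_two] at hdet
  refine IsUnit.of_mul_eq_one (g.1 0 0) ?_
  rw [hg] at hdet
  linear_combination hdet

lemma tP1_smul (g : Matrix.SpecialLinearGroup (Fin 2) S) (hg : g.1 1 0 = 0) (P Q : P1 S) :
    tP1 (g • P) (g • Q) = (g.1 1 1)^2 * tP1 P Q := by
  refine Quotient.inductionOn₂ P Q ?_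
  intro a b
  show tP1 (g • P1.mk a.1 a.2) (g • P1.mk b.1 b.2) = (g.1 1 1)^2 * tP1 (P1.mk a.1 a.2) (P1.mk b.1 b.2)
  rw [P1.smul_mk, P1.smul_mk, tP1_mk, tP1_mk, dets_mulVec, mulVec_one_entry, mulVec_one_entry,
    hg]
  ring

lemma yIsUnit_smul (g : Matrix.SpecialLinearGroup (Fin 2) S) (hg : g.1 1 0 = 0) (P : P1 S) :
    P1.yIsUnit (g • P) ↔ P1.yIsUnit P := by
  refine Quotient.inductionOn P ?_
  intro a
  show P1.yIsUnit (g • P1.mk a.1 a.2) ↔ P1.yIsUnit (P1.mk a.1 a.2)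
  rw [P1.smul_mk, yIsUnit_mk, yIsUnit_mk, mulVec_one_entry, hg, zero_mul, zero_add]
  exact isUnit_unit_mul_iff (gamma0_isUnit_entry g hg)

end P1Lemmas


lemma ring_inverse_neg_one {S : Type*} [CommRing S] : Ring.inverse (-1 : S) = -1 := by
  have h : (-1 : S) * (-1) = 1 := by ring
  have h2 := Ring.mul_inverse_cancel (-1 : S) ⟨⟨-1, -1, h, h⟩, rfl⟩
  linear_combination -h2

section Reps

variable (p : ℕ) [hp : Fact p.Prime] (n : ℕ) [NeZero n]

lemma P1.red_mk (v : Fin 2 → ZMod (p^n)) (hv : IsUnimodular v) :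
    P1.red p n (P1.mk v hv) = P1.mk (fun i => redHom p n (v i))
      (by
        rcases hv with h | h
        · exact Or.inl (h.map (redHom p n))
        · exact Or.inr (h.map (redHom p n))) := rfl

lemma red_ne_iff {v w : Fin 2 → ZMod (p^n)} (hv : IsUnimodular v) (hw : IsUnimodular w) :
    (P1.red p n (P1.mk v hv) ≠ P1.red p n (P1.mk w hw)) ↔ IsUnit (dets v w) := by
  rw [P1.red_mk, P1.red_mk, Ne, P1.mk_eq_mk_field]
  have hd : dets (fun i => redHom p n (v i)) (fun i => redHom p n (w i))
      = redHom p n (dets v w) := by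
    simp only [dets, _root_.map_sub, _root_.map_mul]
  rw [hd]
  exact ⟨fun h => (isUnit_iff_red p n _).mpr h, fun h => (isUnit_iff_red p n _).mp h⟩

/-- Index for canonical nonunit values: either `ε pᵏ⁺¹` or `0`. -/
def WIdx (n : ℕ) : Type := (Bool × Fin (n-1)) ⊕ Unit

/-- Index for orbit representatives. -/
def Idx (n : ℕ) : Type := (Bool × WIdx n) ⊕ Bool

instance : Fintype (WIdx n) := by unfold WIdx; infer_instance
instance : Fintype (Idx n) := by unfold Idx WIdx; infer_instance

variable (c : ZMod (p^n))

/-- canonical nonunit values -/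
def wVal : WIdx n → ZMod (p^n)
  | .inl (e, k) => (if e then c else 1) * (p : ZMod (p^n))^((k : ℕ)+1)
  | .inr _ => 0

lemma wVal_not_isUnit (wi : WIdx n) : ¬ IsUnit (wVal p n c wi) := by
  rw [isUnit_iff_red, not_not]
  match wi with
  | .inr _ => simp [wVal]
  | .inl (e, k) =>
      rw [wVal, _root_.map_mul, red_p_pow_eq_zero p n (by omega), mul_zero]

lemma wVal_canonical (hcu : IsUnit c) (wi : WIdx n) :
    wVal p n c wi = 0 ∨ ∃ (e : Bool) (j : ℕ), 1 ≤ j ∧ j < n ∧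
      wVal p n c wi = (if e then c else 1) * (p : ZMod (p^n))^j := by
  match wi with
  | .inr _ => exact Or.inl rfl
  | .inl (e, k) =>
      refine Or.inr ⟨e, (k : ℕ)+1, by omega, ?_, rfl⟩
      have := k.2
      omega

lemma isUnit_sVal (hcu : IsUnit c) (e : Bool) : IsUnit (if e then c else (1 : ZMod (p^n))) := by
  cases e
  · simp
  · simpa using hcu

/-- The orbit representatives. -/
noncomputable def rep (hcu : IsUnit c) : Idx n → Fsp p n
  | .inr e =>
      ⟨(P1.mk ![0, 1] (isUnimodular_pair_right isUnit_one),
        P1.mk ![if e then c else 1, 1] (isUnimodular_pair_right isUnit_one)), by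
        rw [red_ne_iff]
        have hd : dets ![(0 : ZMod (p^n)), 1] ![if e then c else 1, 1]
            = -(if e then c else 1) := by
          simp [dets]
        rw [hd]
        exact (isUnit_sVal p n c hcu e).neg⟩
  | .inl (false, wi) =>
      ⟨(P1.mk ![0, 1] (isUnimodular_pair_right isUnit_one),
        P1.mk ![1, wVal p n c wi] (isUnimodular_pair_left isUnit_one)), by
        rw [red_ne_iff]
        have hd : dets ![(0 : ZMod (p^n)), 1] ![1, wVal p n c wi] = -1 := by
          simp [dets]
        rw [hd]
        exact isUnit_one.neg⟩
  | .inl (true, wi) =>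
      ⟨(P1.mk ![1, wVal p n c wi] (isUnimodular_pair_left isUnit_one),
        P1.mk ![0, 1] (isUnimodular_pair_right isUnit_one)), by
        rw [red_ne_iff]
        have hd : dets ![(1 : ZMod (p^n)), wVal p n c wi] ![0, 1] = 1 := by
          simp [dets]
        rw [hd]
        exact isUnit_one⟩

lemma tP1_rep_inr (hcu : IsUnit c) (e : Bool) :
    tP1 ((rep p n c hcu (.inr e)).1.1) ((rep p n c hcu (.inr e)).1.2)
      = Ring.inverse (-(if e then c else 1)) := by
  show (1 : ZMod (p^n)) * 1 * Ring.inverse (dets ![0,1] ![if e then c else 1, 1]) = _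
  have hd : dets ![(0 : ZMod (p^n)), 1] ![if e then c else 1, 1] = -(if e then c else 1) := by
    simp [dets]
  rw [hd, one_mul, one_mul]

lemma tP1_rep_false (hcu : IsUnit c) (wi : WIdx n) :
    tP1 ((rep p n c hcu (.inl (false, wi))).1.1) ((rep p n c hcu (.inl (false, wi))).1.2)
      = -(wVal p n c wi) := by
  show (1 : ZMod (p^n)) * wVal p n c wi * Ring.inverse (dets ![0,1] ![1, wVal p n c wi]) = _
  have hd : dets ![(0 : ZMod (p^n)), 1] ![1, wVal p n c wi] = -1 := by
    simp [dets]
  rw [hd, ring_inverse_neg_one, one_mul]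
  ring

lemma tP1_rep_true (hcu : IsUnit c) (wi : WIdx n) :
    tP1 ((rep p n c hcu (.inl (true, wi))).1.1) ((rep p n c hcu (.inl (true, wi))).1.2)
      = wVal p n c wi := by
  show wVal p n c wi * 1 * Ring.inverse (dets ![1, wVal p n c wi] ![0,1]) = _
  have hd : dets ![(1 : ZMod (p^n)), wVal p n c wi] ![0, 1] = 1 := by
    simp [dets]
  rw [hd, Ring.inverse_one, mul_one, mul_one]

end Reps


lemma inverse_sq_rel {S : Type*} [CommRing S] {g x y : S} (hx : IsUnit x) (hy : IsUnit y)
    (h : Ring.inverse x = g^2 * Ring.inverse y) : y = g^2 * x := by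
  have m1 := Ring.mul_inverse_cancel x hx
  have m2 := Ring.mul_inverse_cancel y hy
  linear_combination (x*y)*h - y*m1 + g^2*x*m2

section Inj

variable (p : ℕ) [hp : Fact p.Prime] (n : ℕ) [NeZero n] (c : ZMod (p^n))

example (γ : ↥(Gamma0 (ZMod (p^n)))) (x : Fsp p n) :
    (γ • x).1.1 = (↑γ : Matrix.SpecialLinearGroup (Fin 2) (ZMod (p^n))) • x.1.1 := rfl

lemma flag_fst_inr (hcu : IsUnit c) (e : Bool) :
    P1.yIsUnit (rep p n c hcu (.inr e)).1.1 := by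
  show IsUnit ((![0, 1] : Fin 2 → ZMod (p^n)) 1)
  simp

lemma flag_snd_inr (hcu : IsUnit c) (e : Bool) :
    P1.yIsUnit (rep p n c hcu (.inr e)).1.2 := by
  show IsUnit ((![if e then c else 1, 1] : Fin 2 → ZMod (p^n)) 1)
  simp

lemma flag_fst_false (hcu : IsUnit c) (wi : WIdx n) :
    P1.yIsUnit (rep p n c hcu (.inl (false, wi))).1.1 := by
  show IsUnit ((![0, 1] : Fin 2 → ZMod (p^n)) 1)
  simp

lemma flag_snd_false (hcu : IsUnit c) (wi : WIdx n) :
    ¬ P1.yIsUnit (rep p n c hcu (.inl (false, wi))).1.2 := by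
  show ¬ IsUnit ((![1, wVal p n c wi] : Fin 2 → ZMod (p^n)) 1)
  simpa using wVal_not_isUnit p n c wi

lemma flag_fst_true (hcu : IsUnit c) (wi : WIdx n) :
    ¬ P1.yIsUnit (rep p n c hcu (.inl (true, wi))).1.1 := by
  show ¬ IsUnit ((![1, wVal p n c wi] : Fin 2 → ZMod (p^n)) 1)
  simpa using wVal_not_isUnit p n c wi

lemma flag_snd_true (hcu : IsUnit c) (wi : WIdx n) :
    P1.yIsUnit (rep p n c hcu (.inl (true, wi))).1.2 := by
  show IsUnit ((![0, 1] : Fin 2 → ZMod (p^n)) 1)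
  simp

/-- the key separation: distinct representatives lie in distinct orbits. -/
lemma rep_inj (hp2 : p ≠ 2) (hcu : IsUnit c) (hc : ¬ IsSquare (redHom p n c))
    (i i' : Idx n) (γ : ↥(Gamma0 (ZMod (p^n)))) (h : γ • rep p n c hcu i' = rep p n c hcu i) :
    i = i' := by
  set g : Matrix.SpecialLinearGroup (Fin 2) (ZMod (p^n)) := ↑γ with hgdef
  have hg : g.1 1 0 = 0 := γ.2
  have hgu : IsUnit (g.1 1 1) := gamma0_isUnit_entry g hg
  have h1 : g • (rep p n c hcu i').1.1 = (rep p n c hcu i).1.1 :=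
    congrArg (fun z => z.1.1) h
  have h2 : g • (rep p n c hcu i').1.2 = (rep p n c hcu i).1.2 :=
    congrArg (fun z => z.1.2) h
  have ht : tP1 (rep p n c hcu i).1.1 (rep p n c hcu i).1.2
      = (g.1 1 1)^2 * tP1 (rep p n c hcu i').1.1 (rep p n c hcu i').1.2 := by
    rw [← h1, ← h2, tP1_smul g hg]
  have hf1 : P1.yIsUnit (rep p n c hcu i).1.1 ↔ P1.yIsUnit (rep p n c hcu i').1.1 := by
    rw [← h1, yIsUnit_smul g hg]
  have hf2 : P1.yIsUnit (rep p n c hcu i).1.2 ↔ P1.yIsUnit (rep p n c hcu i').1.2 := by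
    rw [← h2, yIsUnit_smul g hg]
  have hn1 : 0 < n := Nat.pos_of_ne_zero (NeZero.ne n)
  clear h1 h2 h
  rcases i with ⟨b, wi⟩ | e <;> rcases i' with ⟨b', wi'⟩ | e'
  · -- inl vs inl
    cases b <;> cases b'
    · -- false false
      rw [tP1_rep_false, tP1_rep_false] at ht
      have key : wVal p n c wi = (g.1 1 1)^2 * wVal p n c wi' := by
        linear_combination -ht
      rcases wi with ⟨e, k⟩ | u <;> rcases wi' with ⟨e', k'⟩ | u'
      · have key2 : (g.1 1 1)^2 * ((if e' then c else 1) * (p : ZMod (p^n))^((k' : ℕ)+1))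
            = (if e then c else 1) * (p : ZMod (p^n))^((k : ℕ)+1) := key.symm
        obtain ⟨he, hjk⟩ := sq_canonical_inj p n hp2 hcu hc hgu
          (by have := k'.2; omega) (by have := k.2; omega) key2
        have hkk : k' = k := Fin.ext (by omega)
        rw [he, hkk]
      · exfalso
        have hw0 : wVal p n c (Sum.inr u') = 0 := rfl
        rw [hw0, mul_zero] at key
        exact unit_mul_pow_ne_zero p n (by have := k.2; omega)
          (isUnit_sVal p n c hcu e) key
      · exfalso
        have h0 : ((g.1 1 1)^2 * (if e' then c else 1)) * (p : ZMod (p^n))^((k' : ℕ)+1)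
            = 0 := by
          have hw : wVal p n c (.inl (e', k')) =
              (if e' then c else 1) * (p : ZMod (p^n))^((k' : ℕ)+1) := rfl
          have hw0 : wVal p n c (Sum.inr u) = 0 := rfl
          rw [hw, hw0] at key
          linear_combination -key
        exact unit_mul_pow_ne_zero p n (by have := k'.2; omega)
          ((hgu.pow 2).mul (isUnit_sVal p n c hcu e')) h0
      · rfl
    · exact absurd (hf1.mp (flag_fst_false p n c hcu wi)) (flag_fst_true p n c hcu wi')
    · exact absurd (hf1.mpr (flag_fst_false p n c hcu wi')) (flag_fst_true p n c hcu wi)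
    · -- true true
      rw [tP1_rep_true, tP1_rep_true] at ht
      rcases wi with ⟨e, k⟩ | u <;> rcases wi' with ⟨e', k'⟩ | u'
      · have key2 : (g.1 1 1)^2 * ((if e' then c else 1) * (p : ZMod (p^n))^((k' : ℕ)+1))
            = (if e then c else 1) * (p : ZMod (p^n))^((k : ℕ)+1) := ht.symm
        obtain ⟨he, hjk⟩ := sq_canonical_inj p n hp2 hcu hc hgu
          (by have := k'.2; omega) (by have := k.2; omega) key2
        have hkk : k' = k := Fin.ext (by omega)
        rw [he, hkk]
      · exfalso
        have hw0 : wVal p n c (Sum.inr u') = 0 := rfl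
        rw [hw0, mul_zero] at ht
        exact unit_mul_pow_ne_zero p n (by have := k.2; omega)
          (isUnit_sVal p n c hcu e) ht
      · exfalso
        have h0 : ((g.1 1 1)^2 * (if e' then c else 1)) * (p : ZMod (p^n))^((k' : ℕ)+1)
            = 0 := by
          have hw : wVal p n c (.inl (e', k')) =
              (if e' then c else 1) * (p : ZMod (p^n))^((k' : ℕ)+1) := rfl
          have hw0 : wVal p n c (Sum.inr u) = 0 := rfl
          rw [hw, hw0] at ht
          linear_combination -ht
        exact unit_mul_pow_ne_zero p n (by have := k'.2; omega)
          ((hgu.pow 2).mul (isUnit_sVal p n c hcu e')) h0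
      · rfl
  · -- inl vs inr
    cases b
    · exact absurd (hf2.mpr (flag_snd_inr p n c hcu e')) (flag_snd_false p n c hcu wi)
    · exact absurd (hf1.mpr (flag_fst_inr p n c hcu e')) (flag_fst_true p n c hcu wi)
  · -- inr vs inl
    cases b'
    · exact absurd (hf2.mp (flag_snd_inr p n c hcu e)) (flag_snd_false p n c hcu wi')
    · exact absurd (hf1.mp (flag_fst_inr p n c hcu e)) (flag_fst_true p n c hcu wi')
  · -- inr vs inr
    rw [tP1_rep_inr, tP1_rep_inr] at ht
    have key := inverse_sq_rel ((isUnit_sVal p n c hcu e).neg)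
      ((isUnit_sVal p n c hcu e').neg) ht
    have key2 : (g.1 1 1)^2 * ((if e then c else 1) * (p : ZMod (p^n))^0)
        = (if e' then c else 1) * (p : ZMod (p^n))^0 := by
      rw [pow_zero, mul_one, mul_one]
      linear_combination key
    obtain ⟨he, -⟩ := sq_canonical_inj p n hp2 hcu hc hgu hn1 hn1 key2
    rw [he]

end Inj


section Trans

variable (p : ℕ) [hp : Fact p.Prime] (n : ℕ) [NeZero n]

/-- Upper triangular matrix in `SL₂`. -/
def normMat (α : (ZMod (p^n))ˣ) (q : ZMod (p^n)) :
    Matrix.SpecialLinearGroup (Fin 2) (ZMod (p^n)) :=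
  ⟨!![(α : ZMod (p^n)), q; 0, ((α⁻¹ : (ZMod (p^n))ˣ) : ZMod (p^n))], by
    rw [Matrix.det_fin_two_of]
    simp [Units.mul_inv]⟩

lemma normMat_mem (α : (ZMod (p^n))ˣ) (q : ZMod (p^n)) :
    normMat p n α q ∈ Gamma0 (ZMod (p^n)) := by
  show (normMat p n α q).1 1 0 = 0
  simp [normMat]

lemma normMat_mulVec (α : (ZMod (p^n))ˣ) (q : ZMod (p^n)) (w : Fin 2 → ZMod (p^n)) :
    (normMat p n α q).1.mulVec w
      = ![(α : ZMod (p^n)) * w 0 + q * w 1, ((α⁻¹ : (ZMod (p^n))ˣ) : ZMod (p^n)) * w 1] := by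
  funext i
  fin_cases i <;>
    simp [normMat, Matrix.mulVec, dotProduct, Fin.sum_univ_two]

lemma smul_mk_zero_one (α yu : (ZMod (p^n))ˣ) {v : Fin 2 → ZMod (p^n)} (hv : IsUnimodular v)
    (hyu : (yu : ZMod (p^n)) = v 1) :
    normMat p n α (-((α : ZMod (p^n)) * v 0 * ↑yu⁻¹)) • P1.mk v hv
      = P1.mk ![0, 1] (isUnimodular_pair_right isUnit_one) := by
  rw [P1.smul_mk]
  rw [P1.mk_eq_mk_iff]
  refine ⟨α * yu⁻¹, ?_⟩
  rw [normMat_mulVec]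
  funext i
  fin_cases i
  · show ↑(α * yu⁻¹) * ((α : ZMod (p^n)) * v 0 + (-((α : ZMod (p^n)) * v 0 * ↑yu⁻¹)) * v 1) = 0
    rw [← hyu, Units.val_mul]
    linear_combination (-((α : ZMod (p^n))^2 * v 0 * (↑yu⁻¹ : ZMod (p^n)))) * yu.inv_mul
  · show ↑(α * yu⁻¹) * ((↑α⁻¹ : ZMod (p^n)) * v 1) = 1
    rw [← hyu, Units.val_mul]
    linear_combination ((↑yu⁻¹ : ZMod (p^n)) * ↑yu) * α.mul_inv + yu.inv_mul

lemma normMat_mulVec_snd (α yu : (ZMod (p^n))ˣ) (v w : Fin 2 → ZMod (p^n))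
    (hyu : (yu : ZMod (p^n)) = v 1) :
    (normMat p n α (-((α : ZMod (p^n)) * v 0 * ↑yu⁻¹))).1.mulVec w
      = ![-((α : ZMod (p^n)) * ↑yu⁻¹ * dets v w), (↑α⁻¹ : ZMod (p^n)) * w 1] := by
  rw [normMat_mulVec]
  funext i
  fin_cases i
  · show (α : ZMod (p^n)) * w 0 + (-((α : ZMod (p^n)) * v 0 * ↑yu⁻¹)) * w 1
      = -((α : ZMod (p^n)) * ↑yu⁻¹ * dets v w)
    rw [dets, ← hyu]
    linear_combination (-((α : ZMod (p^n)) * w 0)) * yu.inv_mul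
  · rfl

lemma norm_smul_snd_to (α yu u : (ZMod (p^n))ˣ) {v w : Fin 2 → ZMod (p^n)}
    (hw : IsUnimodular w) (hyu : (yu : ZMod (p^n)) = v 1)
    (T : Fin 2 → ZMod (p^n)) (hT : IsUnimodular T)
    (h0 : ↑u * (-((α : ZMod (p^n)) * ↑yu⁻¹ * dets v w)) = T 0)
    (h1 : ↑u * ((↑α⁻¹ : ZMod (p^n)) * w 1) = T 1) :
    normMat p n α (-((α : ZMod (p^n)) * v 0 * ↑yu⁻¹)) • P1.mk w hw = P1.mk T hT := by
  rw [P1.smul_mk, P1.mk_eq_mk_iff]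
  refine ⟨u, ?_⟩
  rw [normMat_mulVec_snd p n α yu v w hyu]
  funext i
  fin_cases i
  · exact h0
  · exact h1

lemma isUnit_snd_of_dets {v w : Fin 2 → ZMod (p^n)} (hd : IsUnit (dets v w))
    (hw1 : ¬ IsUnit (w 1)) : IsUnit (v 1) := by
  by_contra hv1
  have h1 : v 0 * w 1 ∈ nonunits (ZMod (p^n)) := fun hu => hw1 (isUnit_of_mul_isUnit_right hu)
  have h2 : -(w 0 * v 1) ∈ nonunits (ZMod (p^n)) := fun hu =>
    hv1 (isUnit_of_mul_isUnit_right (by simpa using hu.neg))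
  exact (by rw [dets, sub_eq_add_neg] at hd; exact (IsLocalRing.nonunits_add h1 h2) hd : False)

end Trans


section Surj

variable (p : ℕ) [hp : Fact p.Prime] (n : ℕ) [NeZero n]

lemma rep_surj (hp2 : p ≠ 2) (c : ZMod (p^n)) (hcu : IsUnit c)
    (hc : ¬ IsSquare (redHom p n c)) (x : Fsp p n) :
    ∃ (i : Idx n) (γ : ↥(Gamma0 (ZMod (p^n)))), γ • x = rep p n c hcu i := by
  obtain ⟨⟨P, Q⟩, hPQ⟩ := x
  revert hPQ
  induction P using Quotient.ind with | _ a => ?_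
  induction Q using Quotient.ind with | _ b => ?_
  obtain ⟨v, hv⟩ := a
  obtain ⟨w, hw⟩ := b
  intro hPQ
  have hd : IsUnit (dets v w) := (red_ne_iff p n hv hw).mp hPQ
  obtain ⟨du, hdu⟩ : ∃ du : (ZMod (p^n))ˣ, (du : ZMod (p^n)) = dets v w :=
    ⟨hd.unit, hd.unit_spec⟩
  by_cases hv1 : IsUnit (v 1)
  · obtain ⟨yu, hyu⟩ : ∃ yu : (ZMod (p^n))ˣ, (yu : ZMod (p^n)) = v 1 :=
      ⟨hv1.unit, hv1.unit_spec⟩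
    by_cases hw1 : IsUnit (w 1)
    · -- Case A : both second coordinates are units
      obtain ⟨wu, hwu⟩ : ∃ wu : (ZMod (p^n))ˣ, (wu : ZMod (p^n)) = w 1 :=
        ⟨hw1.unit, hw1.unit_spec⟩
      have hXu : IsUnit (-((↑du : ZMod (p^n)) * ↑yu⁻¹ * ↑wu⁻¹)) := by
        simpa [Units.val_mul, mul_assoc] using (du * yu⁻¹ * wu⁻¹).isUnit.neg
      obtain ⟨aa, haa, hcase⟩ := unit_sq_class p n hp2 hcu hc hXu
      obtain ⟨au, hau⟩ : ∃ au : (ZMod (p^n))ˣ, (au : ZMod (p^n)) = aa :=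
        ⟨haa.unit, haa.unit_spec⟩
      have e2 : (↑au⁻¹ : ZMod (p^n)) * aa = 1 := by rw [← hau]; exact au.inv_mul
      obtain ⟨e, hs⟩ : ∃ e : Bool,
          -((↑du : ZMod (p^n)) * ↑yu⁻¹ * ↑wu⁻¹) = aa^2 * (if e then c else 1) := by
        rcases hcase with h | h
        · exact ⟨false, by simpa using h⟩
        · exact ⟨true, by simpa using h⟩
      refine ⟨.inr e,
        ⟨normMat p n au⁻¹ (-((↑au⁻¹ : ZMod (p^n)) * v 0 * ↑yu⁻¹)), normMat_mem p n _ _⟩, ?_⟩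
      apply Subtype.ext
      refine Prod.ext ?_ ?_
      · exact smul_mk_zero_one p n au⁻¹ yu hv hyu
      · refine norm_smul_snd_to p n au⁻¹ yu (au⁻¹ * wu⁻¹) hw hyu
          ![if e then c else 1, 1] (isUnimodular_pair_right isUnit_one) ?_ ?_
        · show (↑(au⁻¹ * wu⁻¹) : ZMod (p^n)) * (-(↑au⁻¹ * ↑yu⁻¹ * dets v w))
            = (if e then c else 1)
          rw [← hdu, Units.val_mul]
          linear_combination ((↑au⁻¹ : ZMod (p^n))^2) * hs
            + (if e then c else 1) * ((↑au⁻¹ : ZMod (p^n)) * aa + 1) * e2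
        · show (↑(au⁻¹ * wu⁻¹) : ZMod (p^n)) * (↑(au⁻¹)⁻¹ * w 1) = 1
          rw [inv_inv, Units.val_mul, ← hwu]
          linear_combination ((↑wu⁻¹ : ZMod (p^n)) * ↑wu) * au.inv_mul + wu.inv_mul
    · -- Case B : w 1 is not a unit
      have hXnu : ¬ IsUnit (-((↑yu : ZMod (p^n)) * ↑du⁻¹ * w 1)) := by
        intro hu
        have hrec : w 1 = -((↑yu⁻¹ : ZMod (p^n)) * ↑du
            * (-((↑yu : ZMod (p^n)) * ↑du⁻¹ * w 1))) := by
          linear_combination (-(w 1 * (↑du : ZMod (p^n)) * ↑du⁻¹)) * yu.inv_mul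
            - w 1 * du.mul_inv
        exact hw1 (by
          rw [hrec]
          simpa [Units.val_mul, mul_assoc] using ((yu⁻¹ * du).isUnit.mul hu).neg)
      obtain ⟨aa, haa, hcase⟩ := sq_class_exists p n hp2 hcu hc
        (-((↑yu : ZMod (p^n)) * ↑du⁻¹ * w 1))
      obtain ⟨au, hau⟩ : ∃ au : (ZMod (p^n))ˣ, (au : ZMod (p^n)) = aa :=
        ⟨haa.unit, haa.unit_spec⟩
      have e2 : (↑au⁻¹ : ZMod (p^n)) * aa = 1 := by rw [← hau]; exact au.inv_mul
      obtain ⟨wi, hs⟩ : ∃ wi : WIdx n,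
          -((↑yu : ZMod (p^n)) * ↑du⁻¹ * w 1) = aa^2 * wVal p n c wi := by
        rcases hcase with hz | ⟨k, hk, hcase2⟩
        · exact ⟨.inr (), by rw [show wVal p n c (Sum.inr ()) = 0 from rfl, mul_zero]; exact hz⟩
        · match k, hk with
          | 0, hk =>
              exfalso
              apply hXnu
              rcases hcase2 with h | h
              · rw [h, pow_zero]
                simpa using (haa.pow 2)
              · rw [h, pow_zero]
                simpa using (haa.pow 2).mul hcu
          | (k'+1), hk =>
              rcases hcase2 with h | h
              · refine ⟨.inl (false, ⟨k', by omega⟩), ?_⟩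
                rw [show wVal p n c (Sum.inl (false, ⟨k', by omega⟩))
                  = 1 * (p : ZMod (p^n))^(k'+1) from rfl]
                exact h
              · refine ⟨.inl (true, ⟨k', by omega⟩), ?_⟩
                rw [show wVal p n c (Sum.inl (true, ⟨k', by omega⟩))
                  = c * (p : ZMod (p^n))^(k'+1) from rfl]
                exact h
      refine ⟨.inl (false, wi),
        ⟨normMat p n au (-((↑au : ZMod (p^n)) * v 0 * ↑yu⁻¹)), normMat_mem p n _ _⟩, ?_⟩
      apply Subtype.ext
      refine Prod.ext ?_ ?_
      · exact smul_mk_zero_one p n au yu hv hyu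
      · refine norm_smul_snd_to p n au yu (-(au⁻¹ * yu * du⁻¹)) hw hyu
          ![1, wVal p n c wi] (isUnimodular_pair_left isUnit_one) ?_ ?_
        · show (↑(-(au⁻¹ * yu * du⁻¹)) : ZMod (p^n)) * (-(↑au * ↑yu⁻¹ * dets v w)) = 1
          rw [← hdu, Units.val_neg, Units.val_mul, Units.val_mul]
          linear_combination ((↑yu : ZMod (p^n)) * ↑yu⁻¹ * ↑du⁻¹ * ↑du) * au.inv_mul
            + ((↑du⁻¹ : ZMod (p^n)) * ↑du) * yu.mul_inv + du.inv_mul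
        · show (↑(-(au⁻¹ * yu * du⁻¹)) : ZMod (p^n)) * (↑au⁻¹ * w 1) = wVal p n c wi
          rw [Units.val_neg, Units.val_mul, Units.val_mul]
          linear_combination ((↑au⁻¹ : ZMod (p^n))^2) * hs
            + wVal p n c wi * ((↑au⁻¹ : ZMod (p^n)) * aa + 1) * e2
  · -- Case C : v 1 is not a unit
    have hd' : IsUnit (dets w v) := by
      rw [show dets w v = -dets v w from by rw [dets, dets]; ring]
      exact hd.neg
    have hw1 : IsUnit (w 1) := isUnit_snd_of_dets p n hd' hv1
    obtain ⟨wu, hwu⟩ : ∃ wu : (ZMod (p^n))ˣ, (wu : ZMod (p^n)) = w 1 :=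
      ⟨hw1.unit, hw1.unit_spec⟩
    obtain ⟨du', hdu'⟩ : ∃ du' : (ZMod (p^n))ˣ, (du' : ZMod (p^n)) = dets w v :=
      ⟨hd'.unit, hd'.unit_spec⟩
    have hXnu : ¬ IsUnit (-((↑wu : ZMod (p^n)) * ↑du'⁻¹ * v 1)) := by
      intro hu
      have hrec : v 1 = -((↑wu⁻¹ : ZMod (p^n)) * ↑du'
          * (-((↑wu : ZMod (p^n)) * ↑du'⁻¹ * v 1))) := by
        linear_combination (-(v 1 * (↑du' : ZMod (p^n)) * ↑du'⁻¹)) * wu.inv_mul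
          - v 1 * du'.mul_inv
      exact hv1 (by
        rw [hrec]
        simpa [Units.val_mul, mul_assoc] using ((wu⁻¹ * du').isUnit.mul hu).neg)
    obtain ⟨aa, haa, hcase⟩ := sq_class_exists p n hp2 hcu hc
      (-((↑wu : ZMod (p^n)) * ↑du'⁻¹ * v 1))
    obtain ⟨au, hau⟩ : ∃ au : (ZMod (p^n))ˣ, (au : ZMod (p^n)) = aa :=
      ⟨haa.unit, haa.unit_spec⟩
    have e2 : (↑au⁻¹ : ZMod (p^n)) * aa = 1 := by rw [← hau]; exact au.inv_mul
    obtain ⟨wi, hs⟩ : ∃ wi : WIdx n,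
        -((↑wu : ZMod (p^n)) * ↑du'⁻¹ * v 1) = aa^2 * wVal p n c wi := by
      rcases hcase with hz | ⟨k, hk, hcase2⟩
      · exact ⟨.inr (), by rw [show wVal p n c (Sum.inr ()) = 0 from rfl, mul_zero]; exact hz⟩
      · match k, hk with
        | 0, hk =>
            exfalso
            apply hXnu
            rcases hcase2 with h | h
            · rw [h, pow_zero]
              simpa using (haa.pow 2)
            · rw [h, pow_zero]
              simpa using (haa.pow 2).mul hcu
        | (k'+1), hk =>
            rcases hcase2 with h | h
            · refine ⟨.inl (false, ⟨k', by omega⟩), ?_⟩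
              rw [show wVal p n c (Sum.inl (false, ⟨k', by omega⟩))
                = 1 * (p : ZMod (p^n))^(k'+1) from rfl]
              exact h
            · refine ⟨.inl (true, ⟨k', by omega⟩), ?_⟩
              rw [show wVal p n c (Sum.inl (true, ⟨k', by omega⟩))
                = c * (p : ZMod (p^n))^(k'+1) from rfl]
              exact h
    refine ⟨.inl (true, wi),
      ⟨normMat p n au (-((↑au : ZMod (p^n)) * w 0 * ↑wu⁻¹)), normMat_mem p n _ _⟩, ?_⟩
    apply Subtype.ext
    refine Prod.ext ?_ ?_
    · refine norm_smul_snd_to p n au wu (-(au⁻¹ * wu * du'⁻¹)) hv hwu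
        ![1, wVal p n c wi] (isUnimodular_pair_left isUnit_one) ?_ ?_
      · show (↑(-(au⁻¹ * wu * du'⁻¹)) : ZMod (p^n)) * (-(↑au * ↑wu⁻¹ * dets w v)) = 1
        rw [← hdu', Units.val_neg, Units.val_mul, Units.val_mul]
        linear_combination ((↑wu : ZMod (p^n)) * ↑wu⁻¹ * ↑du'⁻¹ * ↑du') * au.inv_mul
          + ((↑du'⁻¹ : ZMod (p^n)) * ↑du') * wu.mul_inv + du'.inv_mul
      · show (↑(-(au⁻¹ * wu * du'⁻¹)) : ZMod (p^n)) * (↑au⁻¹ * v 1) = wVal p n c wi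
        rw [Units.val_neg, Units.val_mul, Units.val_mul]
        linear_combination ((↑au⁻¹ : ZMod (p^n))^2) * hs
          + wVal p n c wi * ((↑au⁻¹ : ZMod (p^n)) * aa + 1) * e2
    · exact smul_mk_zero_one p n au wu hw hwu

end Surj

/-- For an odd prime `p` and `n ≥ 1`, the Borel subgroup `Γ₀(ℤ/pⁿℤ)` has exactly `4n`
orbits on the set of pairs of points of `ℙ¹(ℤ/pⁿℤ)` with distinct reductions mod `p`. -/
theorem card_borel_orbits_Fsp (p : ℕ) [Fact p.Prime] (hp2 : p ≠ 2) (n : ℕ) [NeZero n] :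
    Nat.card (MulAction.orbitRel.Quotient (Gamma0 (ZMod (p ^ n))) (Fsp p n)) = 4 * n := by
  obtain ⟨c, hcu, hc⟩ := exists_nonres p n hp2
  let f : Idx n → MulAction.orbitRel.Quotient (Gamma0 (ZMod (p^n))) (Fsp p n) :=
    fun i => Quotient.mk (MulAction.orbitRel (↥(Gamma0 (ZMod (p^n)))) (Fsp p n))
      (rep p n c hcu i)
  have hinj : Function.Injective f := by
    intro i i' h
    have h2 := Quotient.exact h
    have h3 : rep p n c hcu i ∈
        MulAction.orbit (↥(Gamma0 (ZMod (p^n)))) (rep p n c hcu i') :=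
      (MulAction.orbitRel_apply).mp h2
    obtain ⟨γ, hγ⟩ := MulAction.mem_orbit_iff.mp h3
    exact rep_inj p n c hp2 hcu hc i i' γ hγ
  have hsurj : Function.Surjective f := by
    intro q
    obtain ⟨x, hx⟩ := Quotient.exists_rep q
    obtain ⟨i, γ, hγ⟩ := rep_surj p n hp2 c hcu hc x
    refine ⟨i, ?_⟩
    rw [← hx]
    apply Quotient.sound
    exact (MulAction.orbitRel_apply).mpr (MulAction.mem_orbit_iff.mpr ⟨γ, hγ⟩)
  have hcard := Nat.card_eq_of_bijective f ⟨hinj, hsurj⟩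
  rw [← hcard]
  have h1 : Fintype.card (Idx n)
      = Fintype.card ((Bool × ((Bool × Fin (n-1)) ⊕ Unit)) ⊕ Bool) :=
    Fintype.card_congr (Equiv.cast rfl)
  have hn1 : 0 < n := Nat.pos_of_ne_zero (NeZero.ne n)
  rw [Nat.card_eq_fintype_card, h1]
  simp only [Fintype.card_sum, Fintype.card_prod, Fintype.card_bool, Fintype.card_fin,
    Fintype.card_unit]
  omega
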